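/- arXiv:1112.6017 — 3 statements merged into one kernel-verified Lean document; each statement's English description precedes it below -/
import Mathlib

section
/- Let (X,d) be a compact connected metric space with more than one point and finite one-dimensional Hausdorff measure, such that every connected subset has Hausdorff 1-measure at least its diameter, and let f : X → X be Lipschitz with constant L ≥ 1. Then the topological entropy of f satisfies h(f) ≤ log L. -/
open MeasureTheory
open scoped NNReal

open scoped ENNReal ENat

section Aux

open Set

variable {X : Type*} [MetricSpace X] [MeasurableSpace X] [BorelSpace X]
  [CompactSpace X] [ConnectedSpace X]

/-- For every point there is a point at distance at least half the diameter. -/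
lemma aux_exists_far (x : X) :
    ∃ y : X, Metric.diam (Set.univ : Set X) / 2 ≤ dist x y := by
  have hc : Continuous fun z : X => dist x z := continuous_const.dist continuous_id
  obtain ⟨y, -, hy⟩ := isCompact_univ.exists_isMaxOn univ_nonempty hc.continuousOn
  refine ⟨y, ?_⟩
  have hD : Metric.diam (Set.univ : Set X) ≤ 2 * dist x y := by
    apply Metric.diam_le_of_forall_dist_le (by positivity)
    intro a _ b _
    have h1 : dist x a ≤ dist x y := hy (mem_univ a)
    have h2 : dist x b ≤ dist x y := hy (mem_univ b)
    have h3 : dist a b ≤ dist a x + dist x b := dist_triangle a x b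
    rw [dist_comm a x] at h3
    linarith
  linarith

/-- A ball of radius `r` has 1-dimensional Hausdorff measure at least `r`,
provided some point is at distance at least `r` from the center. -/
lemma aux_ball (x : X) {r : ℝ} (hr : 0 < r) (hr2 : ∃ y : X, r ≤ dist x y) :
    ENNReal.ofReal r ≤ μH[1] (Metric.ball x r) := by
  obtain ⟨y, hy⟩ := hr2
  have hconn : IsPreconnected (Set.range (dist x)) :=
    isPreconnected_range (continuous_const.dist continuous_id)
  have hIcc : Set.Icc (0 : ℝ) (dist x y) ⊆ Set.range (dist x) :=
    hconn.Icc_subset ⟨x, dist_self x⟩ ⟨y, rfl⟩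
  have hsub : Set.Ico (0 : ℝ) r ⊆ (dist x) '' (Metric.ball x r) := by
    rintro t ⟨ht0, htr⟩
    obtain ⟨z, hz⟩ := hIcc ⟨ht0, htr.le.trans hy⟩
    refine ⟨z, ?_, hz⟩
    rw [Metric.mem_ball, dist_comm, hz]
    exact htr
  calc ENNReal.ofReal r = μH[1] (Set.Ico (0 : ℝ) r) := by
        rw [MeasureTheory.hausdorffMeasure_real, Real.volume_Ico, sub_zero]
    _ ≤ μH[1] ((dist x) '' (Metric.ball x r)) := measure_mono hsub
    _ ≤ (1 : ℝ≥0∞) ^ (1 : ℝ) * μH[1] (Metric.ball x r) :=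
        (LipschitzWith.dist_right x).hausdorffMeasure_image_le zero_le_one _
    _ = μH[1] (Metric.ball x r) := by simp

/-- A `δ`-separated finite set has cardinality controlled by the total measure. -/
lemma aux_sep {s : Finset X} {δ : ℝ} (hδ : 0 < δ)
    (hfar : ∀ x : X, ∃ y : X, δ / 2 ≤ dist x y)
    (hsep : (↑s : Set X).Pairwise fun a b => δ ≤ dist a b) :
    (s.card : ℝ≥0∞) * ENNReal.ofReal (δ / 2) ≤ μH[1] (Set.univ : Set X) := by
  have hdisj : (↑s : Set X).PairwiseDisjoint fun x => Metric.ball x (δ / 2) := by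
    intro a ha b hb hab
    exact Metric.ball_disjoint_ball (by linarith [hsep ha hb hab])
  calc (s.card : ℝ≥0∞) * ENNReal.ofReal (δ / 2)
      = ∑ x ∈ s, ENNReal.ofReal (δ / 2) := by
        rw [Finset.sum_const, nsmul_eq_mul]
    _ ≤ ∑ x ∈ s, μH[1] (Metric.ball x (δ / 2)) :=
        Finset.sum_le_sum fun x _ => aux_ball x (by linarith) (hfar x)
    _ = μH[1] (⋃ x ∈ s, Metric.ball x (δ / 2)) :=
        (measure_biUnion_finset hdisj fun x _ => measurableSet_ball).symm
    _ ≤ μH[1] (Set.univ : Set X) := measure_mono (subset_univ _)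

end Aux

/-- On a nondegenerate compact connected metric space of finite length (in which
every connected subset has Hausdorff 1-measure at least its diameter), a
Lipschitz map with constant L ≥ 1 has topological entropy at most log L. -/
theorem entropy_le_log_lipschitz {X : Type*} [MetricSpace X] [MeasurableSpace X]
    [BorelSpace X] [CompactSpace X] [ConnectedSpace X] [Nontrivial X]
    (hfin : μH[1] (Set.univ : Set X) < ⊤)
    (hlen : ∀ C : Set X, IsPreconnected C → EMetric.diam C ≤ μH[1] C)
    (f : X → X) (L : ℝ≥0) (hL : 1 ≤ L) (hf : LipschitzWith L f) :
    Dynamics.coverEntropy f Set.univ ≤ (Real.log L : EReal) := by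
  classical
  have hL1 : (1 : ℝ) ≤ (L : ℝ) := by exact_mod_cast hL
  rw [Dynamics.coverEntropy_eq_iSup_netEntropyEntourage]
  refine iSup₂_le fun U hU => ?_
  obtain ⟨ε₀, hε₀, hball⟩ := Metric.mem_uniformity_dist.1 hU
  set D := Metric.diam (Set.univ : Set X) with hDdef
  have hDpos : 0 < D := by
    obtain ⟨x, y, hxy⟩ := exists_pair_ne X
    exact lt_of_lt_of_le (dist_pos.2 hxy)
      (Metric.dist_le_diam_of_mem isCompact_univ.isBounded (Set.mem_univ x) (Set.mem_univ y))
  set ε : ℝ := min ε₀ D with hεdef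
  have hεpos : 0 < ε := lt_min hε₀ hDpos
  have hεD : ε ≤ D := min_le_right _ _
  set V : Set (X × X) := {p : X × X | dist p.1 p.2 < ε} with hVdef
  have hVU : V ⊆ U := fun p hp => hball (lt_of_lt_of_le hp (min_le_left _ _))
  refine le_trans (Dynamics.netEntropyEntourage_antitone f Set.univ hVU) ?_
  set μU := μH[1] (Set.univ : Set X) with hμdef
  have hμfin : μU ≠ ⊤ := hfin.ne
  set a : ℝ := μU.toReal / (ε / 2) + 1 with hadef
  have hapos : 0 < a := by positivity
  set ℓ : ℝ := Real.log L with hℓdef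
  have hℓ : 0 ≤ ℓ := Real.log_nonneg hL1
  -- key cardinality bound
  have key : ∀ n : ℕ, ((Dynamics.netMaxcard f Set.univ V (n + 1) : ℕ∞) : ℝ≥0∞)
      ≤ ENNReal.ofReal (a * (L : ℝ) ^ n) := by
    intro n
    have hLpow : (1 : ℝ) ≤ (L : ℝ) ^ n := one_le_pow₀ hL1
    have cardbound : ∀ sf : Finset X, Dynamics.IsDynNetIn f Set.univ V (n + 1) ↑sf →
        (sf.card : ℝ) ≤ a * (L : ℝ) ^ n := by
      intro sf hs
      set δ : ℝ := ε / (L : ℝ) ^ n with hδdef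
      have hδpos : 0 < δ := div_pos hεpos (by linarith)
      have hδε : δ ≤ ε := div_le_self hεpos.le hLpow
      have hsep : (↑sf : Set X).Pairwise fun x y => δ ≤ dist x y := by
        intro x hx y hy hxy
        by_contra hcon
        push_neg at hcon
        have hy_in : y ∈ UniformSpace.ball x (Dynamics.dynEntourage f V (n + 1)) := by
          rw [Dynamics.mem_ball_dynEntourage]
          intro k hk
          show (f^[k] x, f^[k] y) ∈ V
          have hlip : dist (f^[k] x) (f^[k] y) ≤ (L : ℝ) ^ k * dist x y := by
            simpa using (hf.iterate k).dist_le_mul x y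
          have hk' : ((L : ℝ)) ^ k ≤ (L : ℝ) ^ n :=
            pow_le_pow_right₀ hL1 (Nat.lt_succ_iff.1 hk)
          have hd0 : 0 ≤ dist x y := dist_nonneg
          have : dist (f^[k] x) (f^[k] y) < (L : ℝ) ^ n * δ := by
            apply lt_of_le_of_lt hlip
            calc (L : ℝ) ^ k * dist x y ≤ (L : ℝ) ^ n * dist x y :=
                  mul_le_mul_of_nonneg_right hk' hd0
              _ < (L : ℝ) ^ n * δ := by
                  apply mul_lt_mul_of_pos_left hcon (by linarith)
          have hδL : (L : ℝ) ^ n * δ = ε := by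
            rw [hδdef]; field_simp
          rw [hδL] at this
          exact this
        have hy_in2 : y ∈ UniformSpace.ball y (Dynamics.dynEntourage f V (n + 1)) := by
          rw [Dynamics.mem_ball_dynEntourage]
          intro k _
          show (f^[k] y, f^[k] y) ∈ V
          simp only [hVdef, Set.mem_setOf_eq, dist_self]
          exact hεpos
        exact Set.disjoint_left.1 (hs.2 hx hy hxy) hy_in hy_in2
      have hfar : ∀ x : X, ∃ y : X, δ / 2 ≤ dist x y := by
        intro x
        obtain ⟨y, hy⟩ := aux_exists_far x
        exact ⟨y, le_trans (by rw [← hDdef]; linarith) hy⟩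
      have hcard := aux_sep hδpos hfar hsep
      rw [← hμdef] at hcard
      have h2 : (sf.card : ℝ) * (δ / 2) ≤ μU.toReal := by
        have h3 := ENNReal.toReal_mono hμfin hcard
        rwa [ENNReal.toReal_mul, ENNReal.toReal_natCast _,
          ENNReal.toReal_ofReal (by linarith)] at h3
      have h4 : (sf.card : ℝ) ≤ μU.toReal / (δ / 2) := by
        rw [le_div_iff₀ (by linarith)]
        exact h2
      have h5 : μU.toReal / (δ / 2) = μU.toReal / (ε / 2) * (L : ℝ) ^ n := by
        rw [hδdef]; field_simp
      have h6 : 0 ≤ μU.toReal := ENNReal.toReal_nonneg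
      calc (sf.card : ℝ) ≤ μU.toReal / (δ / 2) := h4
        _ = μU.toReal / (ε / 2) * (L : ℝ) ^ n := h5
        _ ≤ a * (L : ℝ) ^ n := by
            apply mul_le_mul_of_nonneg_right _ (by linarith)
            rw [hadef]; linarith
    have hmax : Dynamics.netMaxcard f Set.univ V (n + 1)
        ≤ ((⌊a * (L : ℝ) ^ n⌋₊ : ℕ) : ℕ∞) := by
      simp only [Dynamics.netMaxcard]
      refine iSup₂_le fun sf hs => ?_
      exact_mod_cast Nat.le_floor (cardbound sf hs)
    calc ((Dynamics.netMaxcard f Set.univ V (n + 1) : ℕ∞) : ℝ≥0∞)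
        ≤ ((⌊a * (L : ℝ) ^ n⌋₊ : ℕ) : ℝ≥0∞) := by exact_mod_cast hmax
      _ = ENNReal.ofReal ((⌊a * (L : ℝ) ^ n⌋₊ : ℕ) : ℝ) := by
          rw [ENNReal.ofReal_natCast]
      _ ≤ ENNReal.ofReal (a * (L : ℝ) ^ n) :=
          ENNReal.ofReal_le_ofReal (Nat.floor_le (by positivity))
  -- from cardinality to entropy
  have hbound : ∀ m : ℕ, 1 ≤ m →
      ENNReal.log (Dynamics.netMaxcard f Set.univ V m) / (m : EReal)
        ≤ ((Real.log a / m + ℓ : ℝ) : EReal) := by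
    intro m hm
    obtain ⟨n, rfl⟩ : ∃ n, m = n + 1 := ⟨m - 1, (Nat.succ_pred_eq_of_pos hm).symm⟩
    have h1 : ENNReal.log (Dynamics.netMaxcard f Set.univ V (n + 1))
        ≤ ((Real.log a + (n + 1) * ℓ : ℝ) : EReal) := by
      refine le_trans (ENNReal.log_monotone (key n)) ?_
      rw [ENNReal.log_ofReal_of_pos (by positivity)]
      apply EReal.coe_le_coe_iff.2
      rw [Real.log_mul hapos.ne' (by positivity), Real.log_pow]
      have hns : (n : ℝ) * Real.log (L : ℝ) ≤ ((n : ℝ) + 1) * ℓ := by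
        rw [hℓdef]
        nlinarith [Real.log_nonneg hL1]
      push_cast
      linarith
    have hmpos : (0 : EReal) < ((n : ℕ) + 1 : ℕ) := by exact_mod_cast Nat.succ_pos n
    calc ENNReal.log (Dynamics.netMaxcard f Set.univ V (n + 1)) / (((n : ℕ) + 1 : ℕ) : EReal)
        ≤ ((Real.log a + (n + 1) * ℓ : ℝ) : EReal) / (((n : ℕ) + 1 : ℕ) : EReal) :=
          EReal.div_le_div_right_of_nonneg hmpos.le h1
      _ = ((Real.log a / (n + 1) + ℓ : ℝ) : EReal) := by
          rw [← EReal.coe_coe_eq_natCast, ← EReal.coe_div]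
          norm_cast
          have hne : ((n : ℝ) + 1) ≠ 0 := by positivity
          push_cast
          field_simp
      _ = ((Real.log a / ((n : ℕ) + 1 : ℕ) + ℓ : ℝ) : EReal) := by push_cast; ring_nf
  have hev : ∀ᶠ m : ℕ in Filter.atTop,
      ENNReal.log (Dynamics.netMaxcard f Set.univ V m) / (m : EReal)
        ≤ ((Real.log a / m + ℓ : ℝ) : EReal) :=
    Filter.eventually_atTop.2 ⟨1, hbound⟩
  have htends : Filter.Tendsto (fun m : ℕ => ((Real.log a / m + ℓ : ℝ) : EReal))
      Filter.atTop (nhds (ℓ : EReal)) := by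
    rw [EReal.tendsto_coe]
    have := (tendsto_const_div_atTop_nhds_zero_nat (Real.log a)).add
      (tendsto_const_nhds (x := ℓ) (f := Filter.atTop))
    simpa using this
  unfold Dynamics.netEntropyEntourage
  refine le_trans (Filter.limsup_le_limsup hev) ?_
  rw [htends.limsup_eq]
end

section
/- Let f : X → X be a continuous surjection of a compact metric space such that there exist a finite closed cover 𝒜 of X, a relation → on 𝒜 (A → B iff f(A) ⊇ B combined with f(A) meeting int B), and a dense family 𝒟 of nonempty closed subsets of X with: (i) A → B implies f(A) ⊇ B; (ii) for every D ∈ 𝒟 there are n ∈ ℕ and A ∈ 𝒜 with f^n(D) ⊇ A; (iii) the directed graph (𝒜, →) is strongly connected and the gcd of lengths of its cycles is 1 (primitive); (iv) ⋃_{A∈𝒜} int(A) is dense in X. Then f is topologically exact: for every nonempty open U ⊆ X there is n with f^n(U) = X. -/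
open Set

/-- There is a path of length `n` from `i` to `j` in the directed graph given by
the relation `arrow`. -/
def IsPathOfLen {m : ℕ} (arrow : Fin m → Fin m → Prop) (n : ℕ) (i j : Fin m) : Prop :=
  ∃ σ : ℕ → Fin m, σ 0 = i ∧ σ n = j ∧ ∀ l < n, arrow (σ l) (σ (l + 1))

/-- Positive multiples of elements stay in an additively closed set. -/
lemma exactness_smul_mem (S : Set ℕ) (hadd : ∀ x ∈ S, ∀ y ∈ S, x + y ∈ S) (x : ℕ)
    (hx : x ∈ S) : ∀ k, 1 ≤ k → k * x ∈ S := by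
  intro k hk
  induction k with
  | zero => omega
  | succ n ih =>
    rcases Nat.eq_or_lt_of_le hk with h | h
    · simpa [← h] using hx
    · have := hadd _ (ih (by omega)) _ hx
      simpa [Nat.succ_mul] using this

/-- A nonempty additively closed set of positive naturals whose elements have no
common divisor larger than `1` contains all sufficiently large naturals. -/
lemma exactness_tail_lemma (S : Set ℕ) (hpos : ∀ n ∈ S, 1 ≤ n)
    (hadd : ∀ x ∈ S, ∀ y ∈ S, x + y ∈ S)
    (hne : S.Nonempty) (hgcd : ∀ d : ℕ, (∀ n ∈ S, d ∣ n) → d = 1) :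
    ∃ N : ℕ, ∀ n ≥ N, n ∈ S := by
  obtain ⟨a, ha⟩ := hne
  have hapos : 1 ≤ a := hpos a ha
  -- the set of gcds of finite lists of elements of S
  set G : Set ℕ := {d | ∃ l : List ℕ, (∀ x ∈ l, x ∈ S) ∧ l.foldr Nat.gcd 0 = d} with hG
  have haG : a ∈ G := ⟨[a], by simp [ha], by simp⟩
  have hGposne : ∃ d, d ∈ G ∧ 0 < d := ⟨a, haG, hapos⟩
  classical
  set d₀ := Nat.find (⟨a, haG, hapos⟩ : ∃ d, d ∈ G ∧ 0 < d) with hd₀def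
  obtain ⟨hd₀G, hd₀pos⟩ := Nat.find_spec (⟨a, haG, hapos⟩ : ∃ d, d ∈ G ∧ 0 < d)
  have hd₀dvd : ∀ s ∈ S, d₀ ∣ s := by
    intro s hs
    by_contra hnd
    obtain ⟨l, hl, hlg⟩ := hd₀G
    have hmem : Nat.gcd s d₀ ∈ G := ⟨s :: l, by simp [hs]; exact hl, by simp [hlg, hd₀def]⟩
    have hlt : Nat.gcd s d₀ < d₀ := by
      have h1 : Nat.gcd s d₀ ∣ d₀ := Nat.gcd_dvd_right _ _
      have h2 : Nat.gcd s d₀ ≠ d₀ := fun h => hnd (h ▸ Nat.gcd_dvd_left s d₀)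
      exact lt_of_le_of_ne (Nat.le_of_dvd hd₀pos h1) h2
    have hgpos : 0 < Nat.gcd s d₀ := Nat.gcd_pos_of_pos_right _ hd₀pos
    exact Nat.find_min _ hlt ⟨hmem, hgpos⟩
  have hd₀1 : d₀ = 1 := hgcd d₀ hd₀dvd
  -- a list with gcd 1
  obtain ⟨l, hl, hlg⟩ := hd₀G
  rw [← hd₀def, hd₀1] at hlg
  -- case a = 1
  rcases Nat.eq_or_lt_of_le hapos with h1 | h2
  · refine ⟨1, fun n hn => ?_⟩
    have := exactness_smul_mem S hadd a ha n (by omega)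
    rwa [← h1, mul_one] at this
  -- a ≥ 2; find s ∈ S ∪ {0} with s ≡ gcd(l) mod a, by induction on l
  have key : ∀ l' : List ℕ, (∀ x ∈ l', x ∈ S) →
      ∃ s : ℕ, (s ∈ S ∨ s = 0) ∧ (s : ZMod a) = ((l'.foldr Nat.gcd 0 : ℕ) : ZMod a) := by
    intro l' hl'
    induction l' with
    | nil => exact ⟨0, Or.inr rfl, by simp⟩
    | cons x t ih =>
      obtain ⟨s, hs, hcast⟩ := ih (fun y hy => hl' y (List.mem_cons_of_mem _ hy))
      have hx : x ∈ S := hl' x List.mem_cons_self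
      set g := t.foldr Nat.gcd 0 with hg
      haveI : NeZero a := ⟨by omega⟩
      -- Bezout
      have hbez : ((Nat.gcd x g : ℕ) : ℤ) = x * Nat.gcdA x g + g * Nat.gcdB x g :=
        Nat.gcd_eq_gcd_ab x g
      set u : ℕ := ((Nat.gcdA x g : ZMod a)).val with hu
      set v : ℕ := ((Nat.gcdB x g : ZMod a)).val with hv
      refine ⟨u * x + v * s, ?_, ?_⟩
      · rcases Nat.eq_zero_or_pos u with hu0 | hu1 <;> rcases Nat.eq_zero_or_pos v with hv0 | hv1
        · right; simp [hu0, hv0]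
        · rcases hs with hs | hs
          · left; simpa [hu0] using exactness_smul_mem S hadd s hs v hv1
          · right; simp [hu0, hs]
        · left; simpa [hv0] using exactness_smul_mem S hadd x hx u hu1
        · rcases hs with hs | hs
          · left
            exact hadd _ (exactness_smul_mem S hadd x hx u hu1) _
              (exactness_smul_mem S hadd s hs v hv1)
          · simpa [hs] using Or.inl (exactness_smul_mem S hadd x hx u hu1)
      · rw [Nat.cast_add, Nat.cast_mul, Nat.cast_mul, hcast]
        have hucast : ((u : ℕ) : ZMod a) = ((Nat.gcdA x g : ℤ) : ZMod a) := by
          simp [hu, ZMod.natCast_val, ZMod.intCast_cast]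
        have hvcast : ((v : ℕ) : ZMod a) = ((Nat.gcdB x g : ℤ) : ZMod a) := by
          simp [hv, ZMod.natCast_val, ZMod.intCast_cast]
        have := congrArg (fun z : ℤ => (z : ZMod a)) hbez
        push_cast at this
        rw [List.foldr_cons, ← hg]
        rw [hucast, hvcast, this]
        ring
  obtain ⟨s, hs, hcast⟩ := key l hl
  rw [hlg] at hcast
  haveI : NeZero a := ⟨by omega⟩
  have hmod : s ≡ 1 [MOD a] := by
    rw [← ZMod.natCast_eq_natCast_iff]
    simpa using hcast
  have hsne : s ≠ 0 := by
    intro h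
    rw [h] at hmod
    have : 0 % a = 1 % a := hmod
    rw [Nat.zero_mod, Nat.mod_eq_of_lt h2] at this
    omega
  have hsS : s ∈ S := hs.resolve_right hsne
  have hs1 : 1 ≤ s := hpos s hsS
  -- conclusion: N = a*s + a
  refine ⟨a * s + a, fun n hn => ?_⟩
  rcases Nat.eq_zero_or_pos (n % a) with hr0 | hr1
  · obtain ⟨k, hk⟩ := Nat.dvd_of_mod_eq_zero hr0
    have hk1 : 1 ≤ k := by
      rcases Nat.eq_zero_or_pos k with h | h
      · rw [h, mul_zero] at hk; omega
      · exact h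
    rw [hk, mul_comm]
    exact exactness_smul_mem S hadd a ha k hk1
  · obtain ⟨t, ht⟩ : ∃ t, t = n % a * s := ⟨_, rfl⟩
    have htS : t ∈ S := by rw [ht]; exact exactness_smul_mem S hadd s hsS _ hr1
    have htle : t ≤ a * s := by
      rw [ht]
      exact Nat.mul_le_mul_right _ (le_of_lt (Nat.mod_lt _ (by omega)))
    have htlt : t < n := by omega
    have hsmod : s % a = 1 := by
      have h := hmod
      unfold Nat.ModEq at h
      rw [Nat.mod_eq_of_lt h2] at h
      exact h
    have hnt : t ≡ n [MOD a] := by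
      show t % a = n % a
      rw [ht, Nat.mul_mod, hsmod, mul_one, Nat.mod_mod_of_dvd _ (dvd_refl a),
        Nat.mod_mod_of_dvd _ (dvd_refl a)]
    obtain ⟨k, hk⟩ := (Nat.modEq_iff_dvd' (le_of_lt htlt)).mp hnt
    have hk1 : 1 ≤ k := by
      rcases Nat.eq_zero_or_pos k with h | h
      · rw [h, Nat.mul_zero] at hk; omega
      · exact h
    have heq : n = t + a * k := by omega
    have hka : a * k ∈ S := by
      rw [mul_comm]; exact exactness_smul_mem S hadd a ha k hk1
    rw [heq]
    exact hadd _ htS _ hka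

/-- Concatenation of paths. -/
lemma exactness_path_append {m : ℕ} {arrow : Fin m → Fin m → Prop} {n k : ℕ}
    {i j l : Fin m} (h1 : IsPathOfLen arrow n i j) (h2 : IsPathOfLen arrow k j l) :
    IsPathOfLen arrow (n + k) i l := by
  obtain ⟨σ₁, hσ₁0, hσ₁n, hσ₁⟩ := h1
  obtain ⟨σ₂, hσ₂0, hσ₂k, hσ₂⟩ := h2
  classical
  refine ⟨fun t => if t < n then σ₁ t else σ₂ (t - n), ?_, ?_, ?_⟩
  · by_cases h : 0 < n
    · simp [h, hσ₁0]
    · have hn0 : n = 0 := by omega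
      simp only [hn0] at hσ₁n hσ₁0 ⊢
      simp [hσ₂0, ← hσ₁n, hσ₁0]
  · have : ¬ n + k < n := by omega
    simp [this, hσ₂k]
  · intro t ht
    dsimp only
    have hle : ∀ u ≤ n, (if u < n then σ₁ u else σ₂ (u - n)) = σ₁ u := by
      intro u hu
      rcases Nat.lt_or_ge u n with h | h
      · simp [h]
      · have : u = n := by omega
        simp [this, hσ₂0, hσ₁n]
    rcases Nat.lt_or_ge (t + 1) n with h | h
    · rw [hle t (by omega), hle (t + 1) (by omega)]
      exact hσ₁ t (by omega)
    · rcases Nat.lt_or_ge t n with h' | h'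
      · have ht1 : t + 1 = n := by omega
        rw [hle t (by omega), hle (t + 1) (by omega)]
        exact hσ₁ t (by omega)
      · have h1 : ¬ t < n := by omega
        have h2 : ¬ t + 1 < n := by omega
        simp only [h1, h2, if_false]
        have : t + 1 - n = (t - n) + 1 := by omega
        rw [this]
        exact hσ₂ (t - n) (by omega)

/-- Along a path of length `n`, the end set is covered by `f^[n]` of the start set. -/
lemma exactness_path_cov {X : Type*} {f : X → X} {m : ℕ} {A : Fin m → Set X}
    {arrow : Fin m → Fin m → Prop}
    (hcov : ∀ i j, arrow i j → A j ⊆ f '' A i) :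
    ∀ (n : ℕ) (i j : Fin m), IsPathOfLen arrow n i j → A j ⊆ f^[n] '' A i := by
  intro n
  induction n with
  | zero =>
    intro i j ⟨σ, h0, hn, _⟩
    have : i = j := h0 ▸ hn ▸ rfl
    simp [← this]
  | succ n ih =>
    intro i j ⟨σ, h0, hn, hσ⟩
    have hpath : IsPathOfLen arrow n i (σ n) := ⟨σ, h0, rfl, fun l hl => hσ l (by omega)⟩
    have h1 : A j ⊆ f '' A (σ n) := hcov _ _ (hn ▸ hσ n (by omega))
    have h2 : A (σ n) ⊆ f^[n] '' A i := ih i (σ n) hpath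
    calc A j ⊆ f '' A (σ n) := h1
    _ ⊆ f '' (f^[n] '' A i) := image_mono h2
    _ = f^[n + 1] '' A i := by rw [Function.iterate_succ', image_comp]

/-- Criterion for topological exactness of a map admitting a primitive Markov-like
transition structure on a finite closed cover. -/
theorem exactness_criterion {X : Type*} [MetricSpace X] [CompactSpace X]
    (f : X → X) (hf : Continuous f) (hsurj : Function.Surjective f)
    (m : ℕ) (A : Fin m → Set X)
    (hclosed : ∀ i, IsClosed (A i)) (hcover : (⋃ i, A i) = univ)
    (arrow : Fin m → Fin m → Prop)
    (harrow : ∀ i j, arrow i j ↔ (f '' A i ∩ interior (A j)).Nonempty)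
    (hcov : ∀ i j, arrow i j → A j ⊆ f '' A i)
    (𝒟 : Set (Set X))
    (h𝒟 : ∀ D ∈ 𝒟, D.Nonempty ∧ IsClosed D)
    (hdense : ∀ U : Set X, IsOpen U → U.Nonempty → ∃ D ∈ 𝒟, D ⊆ U)
    (hreach : ∀ D ∈ 𝒟, ∃ (n : ℕ) (i : Fin m), A i ⊆ f^[n] '' D)
    (hstrong : ∀ i j : Fin m, ∃ n : ℕ, 1 ≤ n ∧ IsPathOfLen arrow n i j)
    (hprim : ∀ d : ℕ, (∀ n : ℕ, 1 ≤ n → (∃ i : Fin m, IsPathOfLen arrow n i i) → d ∣ n)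
      → d = 1)
    (hintdense : Dense (⋃ i, interior (A i))) :
    ∀ U : Set X, IsOpen U → U.Nonempty → ∃ n : ℕ, 1 ≤ n ∧ f^[n] '' U = univ := by
  intro U hU hUne
  classical
  obtain ⟨x, hx⟩ := hUne
  have hxuniv : x ∈ ⋃ i, A i := by rw [hcover]; exact mem_univ x
  obtain ⟨i₀, hi₀⟩ : ∃ i, x ∈ A i := mem_iUnion.mp hxuniv
  -- the set of lengths of loops at i₀
  have := exactness_tail_lemma {n | 1 ≤ n ∧ IsPathOfLen arrow n i₀ i₀}
    (fun n hn => hn.1)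
    (fun a ha b hb => ⟨by have := ha.1; have := hb.1; omega, exactness_path_append ha.2 hb.2⟩)
    (by
      obtain ⟨n, hn1, hn2⟩ := hstrong i₀ i₀
      exact ⟨n, hn1, hn2⟩)
    (by
      intro d hd
      apply hprim
      intro n hn ⟨j, hcyc⟩
      obtain ⟨p1, hp1pos, hp1⟩ := hstrong i₀ j
      obtain ⟨p2, hp2pos, hp2⟩ := hstrong j i₀
      have hc1 : d ∣ p1 + p2 := hd _ ⟨by omega, exactness_path_append hp1 hp2⟩
      have hc2 : d ∣ p1 + n + p2 :=
        hd _ ⟨by omega, exactness_path_append (exactness_path_append hp1 hcyc) hp2⟩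
      have : d ∣ (p1 + n + p2) - (p1 + p2) := Nat.dvd_sub hc2 hc1
      simpa [show p1 + n + p2 - (p1 + p2) = n by omega] using this)
  obtain ⟨N, hN⟩ := this
  -- uniform path length p between all pairs of vertices
  choose pa hpa1 hpa2 using fun i => hstrong i i₀
  choose pb hpb1 hpb2 using fun j => hstrong i₀ j
  obtain ⟨p, hpdef⟩ : ∃ p, p = max N 1 + (Finset.univ.sup pa + Finset.univ.sup pb) :=
    ⟨_, rfl⟩
  have hp1 : 1 ≤ p := by
    have : 1 ≤ max N 1 := le_max_right _ _
    omega
  have hpath_all : ∀ i j : Fin m, IsPathOfLen arrow p i j := by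
    intro i j
    have hai : pa i ≤ Finset.univ.sup pa := Finset.le_sup (Finset.mem_univ i)
    have hbj : pb j ≤ Finset.univ.sup pb := Finset.le_sup (Finset.mem_univ j)
    have hNmax : N ≤ max N 1 := le_max_left _ _
    have hc : p - pa i - pb j ≥ N := by omega
    obtain ⟨hcpos, hcpath⟩ := hN _ hc
    have := exactness_path_append (exactness_path_append (hpa2 i) hcpath) (hpb2 j)
    have heq : pa i + (p - pa i - pb j) + pb j = p := by omega
    rwa [heq] at this
  -- push an element of the cover forward from a dense closed set inside U
  obtain ⟨D, hD𝒟, hDU⟩ := hdense U hU ⟨x, hx⟩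
  obtain ⟨n₀, i₁, hreachD⟩ := hreach D hD𝒟
  refine ⟨p + n₀, by omega, subset_antisymm (subset_univ _) ?_⟩
  rw [← hcover]
  refine iUnion_subset fun j => ?_
  calc A j ⊆ f^[p] '' A i₁ := exactness_path_cov hcov p i₁ j (hpath_all i₁ j)
  _ ⊆ f^[p] '' (f^[n₀] '' D) := image_mono hreachD
  _ ⊆ f^[p] '' (f^[n₀] '' U) := image_mono (image_mono hDU)
  _ = f^[p + n₀] '' U := by rw [Function.iterate_add, image_comp]
end

section
/- Let k ≥ 2 and consider the directed graph on vertices {X₀, X₁, …, X_k} with edges X_i → X_{(i+1) mod (k+1)} for all i, plus the extra edge X₀ → X₂. For any directed path (A₀,…,A_{n−1}) in this graph, let k_n be the number of indices l with A_l ∈ {X₀, X_k}. Then any two such indices l_j < l_{j+2} (the j-th and (j+2)-th occurrences) satisfy l_{j+2} − l_j ≥ k − 1; consequently limsup_{n→∞} (max over paths of length n of k_n)/n ≤ 2/(k−1). -/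
open Filter Finset

private lemma fb_two_val {k : ℕ} (hk : 2 ≤ k) : ((2 : Fin (k+1))).val = 2 := by
  have h1 : 1 % (k+1) = 1 := Nat.mod_eq_of_lt (by omega)
  rw [show (2 : Fin (k+1)) = (1 : Fin (k+1)) + 1 from by ext; simp [Fin.val_add], Fin.val_add,
    Fin.val_one', h1]
  exact Nat.mod_eq_of_lt (by omega)

private lemma fb_step {k : ℕ} (hk : 2 ≤ k) {arrow : Fin (k+1) → Fin (k+1) → Prop}
    (harrow : ∀ i j, arrow i j ↔ (j = i + 1 ∨ (i = 0 ∧ j = 2)))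
    {a b : Fin (k+1)} (h : arrow a b) :
    (b.val = (a.val + 1) % (k+1)) ∨ (a.val = 0 ∧ b.val = 2) := by
  rcases (harrow a b).1 h with h | ⟨h0, h2⟩
  · left
    rw [h, Fin.val_add, Fin.val_one', Nat.mod_eq_of_lt (show 1 < k+1 by omega)]
  · right
    exact ⟨by rw [h0]; rfl, by rw [h2]; exact fb_two_val hk⟩

private lemma fb_run0 {k n : ℕ} (hk : 2 ≤ k) {arrow : Fin (k+1) → Fin (k+1) → Prop}
    (harrow : ∀ i j, arrow i j ↔ (j = i + 1 ∨ (i = 0 ∧ j = 2)))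
    {A : ℕ → Fin (k+1)} (hA : ∀ l, l + 1 < n → arrow (A l) (A (l+1)))
    {l : ℕ} (h0 : (A l).val = 0) :
    ∀ j, 1 ≤ j → j + 2 ≤ k → l + j < n →
      (A (l+j)).val = j ∨ (A (l+j)).val = j + 1 := by
  intro j
  induction j with
  | zero => omega
  | succ j ih =>
    intro h1 h2 hn
    rcases Nat.eq_zero_or_pos j with rfl | hj
    · simp only [Nat.zero_add] at h2 hn ⊢
      have hs := fb_step hk harrow (hA l (by omega))
      rcases hs with h | ⟨_, hb⟩
      · left
        rw [h, h0]
        exact Nat.mod_eq_of_lt (by omega)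
      · right; omega
    · have ih' := ih (by omega) (by omega) (by omega)
      have hs := fb_step hk harrow (hA (l+j) (show l + j + 1 < n by omega))
      rw [show l + (j+1) = l + j + 1 from by omega]
      rcases hs with h | ⟨ha, _⟩
      · have hlt : (A (l+j)).val + 1 < k + 1 := by omega
        rw [h, Nat.mod_eq_of_lt hlt]
        omega
      · omega

private lemma fb_gap0 {k n : ℕ} (hk : 2 ≤ k) {arrow : Fin (k+1) → Fin (k+1) → Prop}
    (harrow : ∀ i j, arrow i j ↔ (j = i + 1 ∨ (i = 0 ∧ j = 2)))
    {A : ℕ → Fin (k+1)} (hA : ∀ l, l + 1 < n → arrow (A l) (A (l+1)))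
    {l l' : ℕ} (h0 : (A l).val = 0) (hS : (A l').val = 0 ∨ (A l').val = k)
    (hll : l < l') (hn : l' < n) : k - 1 ≤ l' - l := by
  by_contra h
  have h1 : 1 ≤ l' - l := by omega
  have h2 : (l' - l) + 2 ≤ k := by omega
  have := fb_run0 hk harrow hA h0 (l' - l) h1 h2 (by omega)
  rw [show l + (l' - l) = l' from by omega] at this
  omega

private lemma fb_stepK {k n : ℕ} (hk : 2 ≤ k) {arrow : Fin (k+1) → Fin (k+1) → Prop}
    (harrow : ∀ i j, arrow i j ↔ (j = i + 1 ∨ (i = 0 ∧ j = 2)))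
    {A : ℕ → Fin (k+1)} (hA : ∀ l, l + 1 < n → arrow (A l) (A (l+1)))
    {l : ℕ} (hK : (A l).val = k) (hn : l + 1 < n) : (A (l+1)).val = 0 := by
  rcases fb_step hk harrow (hA l hn) with h | ⟨ha, _⟩
  · rw [h, hK, Nat.mod_self]
  · omega

private lemma fb_memS {k : ℕ} (a : Fin (k+1)) :
    (a = 0 ∨ a = Fin.last k) ↔ (a.val = 0 ∨ a.val = k) := by
  rw [Fin.ext_iff, Fin.ext_iff]
  simp

private lemma fb_part1 {k : ℕ} (hk : 2 ≤ k) {arrow : Fin (k+1) → Fin (k+1) → Prop}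
    (harrow : ∀ i j, arrow i j ↔ (j = i + 1 ∨ (i = 0 ∧ j = 2)))
    (n : ℕ) (A : ℕ → Fin (k+1)) (hA : ∀ l, l + 1 < n → arrow (A l) (A (l+1)))
    (l1 l2 l3 : ℕ) (h12 : l1 < l2) (h23 : l2 < l3) (h3n : l3 < n)
    (hS1 : A l1 = 0 ∨ A l1 = Fin.last k)
    (hS2 : A l2 = 0 ∨ A l2 = Fin.last k)
    (hS3 : A l3 = 0 ∨ A l3 = Fin.last k) : k - 1 ≤ l3 - l1 := by
  rw [fb_memS] at hS1 hS2 hS3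
  rcases hS1 with h1 | h1
  · have := fb_gap0 hk harrow hA h1 hS2 h12 (by omega)
    omega
  · have h0 : (A (l1+1)).val = 0 := fb_stepK hk harrow hA h1 (by omega)
    rcases Nat.lt_or_ge (l1+1) l2 with h | h
    · have := fb_gap0 hk harrow hA h0 hS2 h (by omega)
      omega
    · have hl2 : l2 = l1 + 1 := by omega
      have := fb_gap0 hk harrow hA (hl2 ▸ h0 : (A l2).val = 0) hS3 h23 h3n
      omega

private lemma fb_count {k n : ℕ} (hk : 2 ≤ k) {arrow : Fin (k+1) → Fin (k+1) → Prop}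
    (harrow : ∀ i j, arrow i j ↔ (j = i + 1 ∨ (i = 0 ∧ j = 2)))
    {A : ℕ → Fin (k+1)} (hA : ∀ l, l + 1 < n → arrow (A l) (A (l+1))) :
    ((Finset.range n).filter (fun l => A l = 0 ∨ A l = Fin.last k)).card * (k-1)
      ≤ 2 * n + 2 * (k-1) := by
  set F := (Finset.range n).filter (fun l => A l = 0 ∨ A l = Fin.last k) with hF
  set m := F.card with hm
  rcases Nat.eq_zero_or_pos m with h0 | h0
  · rw [h0]; omega
  · set e := F.orderEmbOfFin (rfl : F.card = m) with he
    have hmem : ∀ i : Fin m, (e i) ∈ F := fun i => F.orderEmbOfFin_mem rfl i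
    have hlt : ∀ i : Fin m, (e i) < n := by
      intro i
      have h := hmem i
      simp only [hF, Finset.mem_filter, Finset.mem_range] at h
      exact h.1
    have hP : ∀ i : Fin m, A (e i) = 0 ∨ A (e i) = Fin.last k := by
      intro i
      have h := hmem i
      simp only [hF, Finset.mem_filter, Finset.mem_range] at h
      exact h.2
    have hmono : ∀ i j : Fin m, i < j → (e i) < (e j) := fun i j hij =>
      e.strictMono hij
    have key : ∀ i : ℕ, ∀ h : 2*i < m, i * (k-1) ≤ e ⟨2*i, h⟩ := by
      intro i
      induction i with
      | zero => intro h; simp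
      | succ i ih =>
        intro h
        have h2 : 2*i < m := by omega
        have hih := ih h2
        have hm1 : 2*i+1 < m := by omega
        have hlt1 : (e ⟨2*i, h2⟩ : ℕ) < e ⟨2*i+1, hm1⟩ :=
          hmono _ _ (by simp [Fin.lt_def])
        have hlt2 : (e ⟨2*i+1, hm1⟩ : ℕ) < e ⟨2*(i+1), h⟩ :=
          hmono _ _ (by simp [Fin.lt_def]; omega)
        have hpart := fb_part1 hk harrow n A hA (e ⟨2*i, h2⟩) (e ⟨2*i+1, hm1⟩)
          (e ⟨2*(i+1), h⟩) hlt1 hlt2 (hlt _) (hP _) (hP _) (hP _)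
        calc (i+1) * (k-1) = i * (k-1) + (k-1) := by ring
          _ ≤ (e ⟨2*(i+1), h⟩ : ℕ) := by omega
    set q := (m-1)/2 with hq
    have h2q : 2*q < m := by omega
    have hkey := key q h2q
    have hqn : q * (k-1) < n := lt_of_le_of_lt hkey (hlt _)
    have hmq : m ≤ 2*q + 2 := by omega
    calc m * (k-1) ≤ (2*q+2) * (k-1) := Nat.mul_le_mul_right _ hmq
      _ = 2 * (q * (k-1)) + 2 * (k-1) := by ring
      _ ≤ 2 * n + 2 * (k-1) := by omega

/-- In the cyclic graph X₀ → X₁ → ⋯ → X_k → X₀ with extra edge X₀ → X₂, any three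
occurrences of vertices from {X₀, X_k} along a path span at least k−1 steps;
consequently the maximal asymptotic frequency of {X₀, X_k} along paths is at most
2/(k−1). -/
theorem frequency_bound_in_cycle_graph (k : ℕ) (hk : 2 ≤ k)
    (arrow : Fin (k + 1) → Fin (k + 1) → Prop)
    (harrow : ∀ i j : Fin (k + 1), arrow i j ↔ (j = i + 1 ∨ (i = 0 ∧ j = 2))) :
    (∀ (n : ℕ) (A : ℕ → Fin (k + 1)),
      (∀ l, l + 1 < n → arrow (A l) (A (l + 1))) →
      ∀ l1 l2 l3 : ℕ, l1 < l2 → l2 < l3 → l3 < n →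
        (A l1 = 0 ∨ A l1 = Fin.last k) →
        (A l2 = 0 ∨ A l2 = Fin.last k) →
        (A l3 = 0 ∨ A l3 = Fin.last k) →
        k - 1 ≤ l3 - l1) ∧
    Filter.limsup (fun n : ℕ =>
      ((sSup {c : ℕ | ∃ A : ℕ → Fin (k + 1),
          (∀ l, l + 1 < n → arrow (A l) (A (l + 1))) ∧
          c = ((Finset.range n).filter
                (fun l => A l = 0 ∨ A l = Fin.last k)).card} : ℕ) : ℝ) / n)
      Filter.atTop ≤ 2 / ((k : ℝ) - 1) := by
  constructor
  · exact fun n A hA l1 l2 l3 h12 h23 h3n hS1 hS2 hS3 =>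
      fb_part1 hk harrow n A hA l1 l2 l3 h12 h23 h3n hS1 hS2 hS3
  · have hk1 : (1:ℝ) ≤ (k:ℝ) - 1 := by
      have : (2:ℝ) ≤ (k:ℝ) := by exact_mod_cast hk
      linarith
    have hkpos : (0:ℝ) < (k:ℝ) - 1 := by linarith
    set cc : ℝ := 2 / ((k : ℝ) - 1) with hcc
    set f : ℕ → ℝ := fun n : ℕ =>
      ((sSup {c : ℕ | ∃ A : ℕ → Fin (k + 1),
          (∀ l, l + 1 < n → arrow (A l) (A (l + 1))) ∧
          c = ((Finset.range n).filter
                (fun l => A l = 0 ∨ A l = Fin.last k)).card} : ℕ) : ℝ) / n with hf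
    set g : ℕ → ℝ := fun n => cc + 2 / n with hg
    have hfnonneg : ∀ n, 0 ≤ f n := by
      intro n
      simp only [hf]
      positivity
    have hgtend : Tendsto g atTop (nhds cc) := by
      have h2 : Tendsto (fun n : ℕ => (2:ℝ) / n) atTop (nhds 0) :=
        tendsto_const_div_atTop_nhds_zero_nat 2
      have h3 := Tendsto.add
        (tendsto_const_nhds : Tendsto (fun _ : ℕ => cc) atTop (nhds cc)) h2
      simpa using h3
    have hfg : ∀ n, f n ≤ g n := by
      intro n
      rcases Nat.eq_zero_or_pos n with rfl | hn
      · have hzero : f 0 = 0 := by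
          simp only [hf]
          norm_num
        rw [hzero]
        have hgpos : (0:ℝ) ≤ cc := by rw [hcc]; positivity
        simp only [hg, Nat.cast_zero, div_zero, add_zero]
        exact hgpos
      · simp only [hf, hg]
        set S := {c : ℕ | ∃ A : ℕ → Fin (k + 1),
          (∀ l, l + 1 < n → arrow (A l) (A (l + 1))) ∧
          c = ((Finset.range n).filter
                (fun l => A l = 0 ∨ A l = Fin.last k)).card} with hS
        have hSne : S.Nonempty := by
          refine ⟨_, fun l => Fin.ofNat (k+1) l, fun l _ => ?_, rfl⟩
          rw [harrow]
          left
          ext; simp [Fin.val_add]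
        have hSbdd : BddAbove S := by
          refine ⟨n, fun x hx => ?_⟩
          obtain ⟨A, _, hx⟩ := hx
          rw [hx]
          calc ((Finset.range n).filter _).card ≤ (Finset.range n).card :=
                Finset.card_filter_le _ _
            _ = n := Finset.card_range n
        obtain ⟨A, hA, hsup⟩ := Nat.sSup_mem hSne hSbdd
        have hcount := fb_count hk harrow hA
        set m := ((Finset.range n).filter
            (fun l => A l = 0 ∨ A l = Fin.last k)).card with hmdef
        rw [hsup]
        have hk1' : ((k - 1 : ℕ) : ℝ) = (k:ℝ) - 1 := by
          rw [Nat.cast_sub (by omega)]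
          norm_num
        have hcast : (m:ℝ) * ((k:ℝ) - 1) ≤ 2 * n + 2 * ((k:ℝ) - 1) := by
          have h1 : ((m * (k-1) : ℕ) : ℝ) ≤ ((2 * n + 2 * (k-1) : ℕ) : ℝ) := by
            exact_mod_cast hcount
          push_cast [hk1'] at h1
          linarith
        have hnpos : (0:ℝ) < n := by exact_mod_cast hn
        rw [div_le_iff₀ hnpos]
        have hexp : (cc + 2 / (n:ℝ)) * n = 2 * n / ((k:ℝ)-1) + 2 := by
          rw [hcc]
          field_simp
        rw [hexp, ← sub_le_iff_le_add, le_div_iff₀ hkpos]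
        nlinarith [hcast]
    have hbelow : IsBoundedUnder (· ≥ ·) atTop f :=
      isBoundedUnder_of ⟨0, fun n => hfnonneg n⟩
    have hcobdd : IsCoboundedUnder (· ≤ ·) atTop f := hbelow.isCoboundedUnder_le
    have hbdd : IsBoundedUnder (· ≤ ·) atTop g := hgtend.isBoundedUnder_le
    calc Filter.limsup f atTop ≤ Filter.limsup g atTop :=
          limsup_le_limsup (Eventually.of_forall hfg) hcobdd hbdd
      _ = cc := hgtend.limsup_eq
end
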